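/- arXiv:2012.03376 — 6 statements merged into one kernel-verified Lean document; each statement's English description precedes it below -/
import Mathlib

section
/- Let μ be a probability measure and f measurable. If sup_k ((2k)!⁻¹ ∫ f^{2k} dμ)^{1/(2k)} ≤ 1, then ∫ (cosh(|f|/√2) − 1) dμ ≤ 1, hence the Luxemburg norm of f in L^{cosh−1}(μ) is at most √2. -/
open MeasureTheory Real
open scoped ENNReal

lemma aux_pointwise (t : ℝ) :
    ENNReal.ofReal (Real.cosh t - 1)
      = ∑' n : ℕ, ENNReal.ofReal (t ^ (2 * (n + 1)) / ((2 * (n + 1)).factorial : ℝ)) := by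
  have h := Real.hasSum_cosh t
  have h1 : HasSum (fun n : ℕ => t ^ (2 * (n + 1)) / ((2 * (n + 1)).factorial : ℝ))
      (Real.cosh t - 1) := by
    have := (hasSum_nat_add_iff' (f := fun n : ℕ => t ^ (2 * n) / ((2 * n).factorial : ℝ)) 1).2 h
    simpa using this
  rw [← h1.tsum_eq, ENNReal.ofReal_tsum_of_nonneg
    (fun n => div_nonneg (by rw [pow_mul]; positivity) (by positivity)) h1.summable]

lemma aux_geom : ∑' n : ℕ, ENNReal.ofReal ((2:ℝ)⁻¹ ^ (n + 1)) = 1 := by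
  have h2 : ENNReal.ofReal (2:ℝ)⁻¹ = (2:ℝ≥0∞)⁻¹ := by
    rw [ENNReal.ofReal_inv_of_pos two_pos]; norm_num
  calc ∑' n : ℕ, ENNReal.ofReal ((2:ℝ)⁻¹ ^ (n + 1))
      = ∑' n : ℕ, (2:ℝ≥0∞)⁻¹ * (2⁻¹) ^ n := by
        simp_rw [ENNReal.ofReal_pow (by norm_num : (0:ℝ) ≤ 2⁻¹), h2, pow_succ, mul_comm]
    _ = (2:ℝ≥0∞)⁻¹ * (1 - 2⁻¹)⁻¹ := by rw [ENNReal.tsum_mul_left, ENNReal.tsum_geometric]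
    _ = 1 := by
        rw [ENNReal.one_sub_inv_two, inv_inv]
        exact ENNReal.inv_mul_cancel two_ne_zero ENNReal.ofNat_ne_top

/-- If all even moments satisfy `∫ f^{2k} dμ ≤ (2k)!` (i.e. the moment norm is at
most `1`), then `∫ (cosh(|f|/√2) - 1) dμ ≤ 1`, so the Luxemburg norm of `f` in
`L^{cosh-1}(μ)` is at most `√2`. -/
theorem orlicz_bound_of_moment_bound
    {α : Type*} [MeasurableSpace α] (μ : Measure α) [IsProbabilityMeasure μ]
    (f : α → ℝ) (hf : Measurable f)
    (hmom : ∀ k : ℕ, 1 ≤ k →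
      ∫⁻ x, ENNReal.ofReal (f x ^ (2 * k)) ∂μ ≤ ENNReal.ofReal ((Nat.factorial (2 * k) : ℕ) : ℝ)) :
    ∫⁻ x, ENNReal.ofReal (Real.cosh (|f x| / Real.sqrt 2) - 1) ∂μ ≤ 1 := by
  have hpt : ∀ x, ENNReal.ofReal (Real.cosh (|f x| / Real.sqrt 2) - 1)
      = ∑' n : ℕ, ENNReal.ofReal ((2:ℝ)⁻¹ ^ (n + 1) / ((2 * (n + 1)).factorial : ℝ))
          * ENNReal.ofReal (f x ^ (2 * (n + 1))) := by
    intro x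
    rw [aux_pointwise]
    congr 1; funext n
    have hp : (|f x| / Real.sqrt 2) ^ (2 * (n + 1))
        = (2:ℝ)⁻¹ ^ (n + 1) * f x ^ (2 * (n + 1)) := by
      rw [pow_mul, pow_mul, div_pow, sq_abs, Real.sq_sqrt (by norm_num : (0:ℝ) ≤ 2),
        div_eq_inv_mul, mul_pow]
    rw [hp, ← ENNReal.ofReal_mul (by positivity)]
    ring_nf
  simp_rw [hpt]
  rw [lintegral_tsum (fun n => (((hf.pow measurable_const).ennreal_ofReal).const_mul _).aemeasurable)]
  have hle : ∀ n : ℕ,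
      ∫⁻ x, ENNReal.ofReal ((2:ℝ)⁻¹ ^ (n + 1) / ((2 * (n + 1)).factorial : ℝ))
          * ENNReal.ofReal (f x ^ (2 * (n + 1))) ∂μ
        ≤ ENNReal.ofReal ((2:ℝ)⁻¹ ^ (n + 1)) := by
    intro n
    rw [lintegral_const_mul _ ((hf.pow measurable_const).ennreal_ofReal)]
    calc ENNReal.ofReal ((2:ℝ)⁻¹ ^ (n + 1) / ((2 * (n + 1)).factorial : ℝ))
          * ∫⁻ x, ENNReal.ofReal (f x ^ (2 * (n + 1))) ∂μ
        ≤ ENNReal.ofReal ((2:ℝ)⁻¹ ^ (n + 1) / ((2 * (n + 1)).factorial : ℝ))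
          * ENNReal.ofReal (((2 * (n + 1)).factorial : ℝ)) :=
          mul_le_mul_right (hmom (n + 1) (Nat.le_add_left 1 n)) _
      _ = ENNReal.ofReal ((2:ℝ)⁻¹ ^ (n + 1)) := by
          rw [← ENNReal.ofReal_mul (by positivity),
            div_mul_cancel₀ _ (by exact_mod_cast (2 * (n + 1)).factorial_ne_zero)]
  calc _ ≤ ∑' n : ℕ, ENNReal.ofReal ((2:ℝ)⁻¹ ^ (n + 1)) := ENNReal.tsum_le_tsum hle
    _ = 1 := aux_geom
end

section
/- The moment equivalent norm f ↦ sup_k ((2k)!⁻¹ ∫ f^{2k} dμ)^{1/(2k)} is equivalent to the Luxemburg norm of the Orlicz space L^{cosh−1}(μ): if ‖f‖_{Luxemburg} ≤ 1 then the moment norm is ≤ 1, and if the moment norm is ≤ 1 then ‖f‖_{Luxemburg} ≤ √2. -/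
open MeasureTheory Real

/-- The Luxemburg (quasi-)norm of `f` for the Young function `cosh - 1`. -/
noncomputable def luxemburgCosh {α : Type*} [MeasurableSpace α]
    (μ : Measure α) (f : α → ℝ) : ℝ :=
  sInf {c : ℝ | 0 < c ∧ ∫⁻ x, ENNReal.ofReal (Real.cosh (|f x| / c) - 1) ∂μ ≤ 1}

open scoped ENNReal

lemma aux_pointwise_s8 (x : ℝ) {k : ℕ} (hk : 1 ≤ k) :
    x ^ (2 * k) / (Nat.factorial (2 * k) : ℝ) ≤ Real.cosh x - 1 := by
  have h := Real.hasSum_cosh x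
  have hnn : ∀ n, 0 ≤ x ^ (2 * n) / (Nat.factorial (2 * n) : ℝ) := fun n => by
    exact div_nonneg (Even.pow_nonneg ⟨n, by ring⟩ x) (by positivity)
  have hle : ∑ n ∈ ({0, k} : Finset ℕ), x ^ (2 * n) / (Nat.factorial (2 * n) : ℝ)
      ≤ Real.cosh x := sum_le_hasSum _ (fun n _ => hnn n) h
  rw [Finset.sum_pair (by omega : (0:ℕ) ≠ k)] at hle
  simp only [mul_zero, pow_zero, Nat.factorial_zero, Nat.cast_one, div_one] at hle
  linarith

-- shifted series for cosh(y/√2) - 1, in terms of y^(2(n+1)) / (2^(n+1) (2(n+1))!)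
lemma aux_hasSum (y : ℝ) :
    HasSum (fun n : ℕ => y ^ (2 * (n + 1)) *
        ((2:ℝ) ^ (n + 1) * (Nat.factorial (2 * (n + 1)) : ℝ))⁻¹)
      (Real.cosh (y / Real.sqrt 2) - 1) := by
  have h := Real.hasSum_cosh (y / Real.sqrt 2)
  have h1 : HasSum (fun n : ℕ => (y / Real.sqrt 2) ^ (2 * (n + 1)) /
      (Nat.factorial (2 * (n + 1)) : ℝ)) (Real.cosh (y / Real.sqrt 2) - 1) := by
    rw [hasSum_nat_add_iff (f := fun n : ℕ => (y / Real.sqrt 2) ^ (2 * n) /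
      (Nat.factorial (2 * n) : ℝ)) 1]
    simpa using h
  convert h1 using 2 with n
  have hs : Real.sqrt 2 ^ (2 * (n + 1)) = (2:ℝ) ^ (n + 1) := by
    rw [pow_mul, Real.sq_sqrt (by norm_num)]
  rw [div_pow, hs]
  field_simp

/-- The moment norm `sup_k ((2k)!⁻¹ ∫ f^{2k})^{1/2k}` is equivalent to the
Luxemburg norm of `L^{cosh-1}(μ)`: a Luxemburg bound `≤ 1` gives moment norm
`≤ 1`, and moment norm `≤ 1` gives Luxemburg norm `≤ √2`. -/
theorem moment_norm_equivalent_luxemburg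
    {α : Type*} [MeasurableSpace α] (μ : Measure α) [IsProbabilityMeasure μ]
    (f : α → ℝ) (hf : Measurable f) :
    ((∫⁻ x, ENNReal.ofReal (Real.cosh |f x| - 1) ∂μ ≤ 1) →
      ∀ k : ℕ, 1 ≤ k →
        ∫⁻ x, ENNReal.ofReal (f x ^ (2 * k)) ∂μ ≤
          ENNReal.ofReal ((Nat.factorial (2 * k) : ℕ) : ℝ)) ∧
    ((∀ k : ℕ, 1 ≤ k →
        ∫⁻ x, ENNReal.ofReal (f x ^ (2 * k)) ∂μ ≤
          ENNReal.ofReal ((Nat.factorial (2 * k) : ℕ) : ℝ)) →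
      luxemburgCosh μ f ≤ Real.sqrt 2) := by
  constructor
  · intro h k hk
    have hfac : (0:ℝ) < (Nat.factorial (2 * k) : ℝ) := by positivity
    calc ∫⁻ x, ENNReal.ofReal (f x ^ (2 * k)) ∂μ
        ≤ ∫⁻ x, ENNReal.ofReal ((Nat.factorial (2 * k) : ℝ)) *
            ENNReal.ofReal (Real.cosh |f x| - 1) ∂μ := by
          refine lintegral_mono fun x => ?_
          rw [← ENNReal.ofReal_mul hfac.le]
          refine ENNReal.ofReal_le_ofReal ?_
          have h1 : f x ^ (2 * k) = |f x| ^ (2 * k) := by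
            rw [← abs_pow, abs_of_nonneg (Even.pow_nonneg ⟨k, by ring⟩ _)]
          have := aux_pointwise_s8 |f x| hk
          rw [div_le_iff₀ hfac] at this
          rw [h1]; linarith [this]
      _ = ENNReal.ofReal ((Nat.factorial (2 * k) : ℝ)) *
            ∫⁻ x, ENNReal.ofReal (Real.cosh |f x| - 1) ∂μ :=
          lintegral_const_mul' _ _ ENNReal.ofReal_ne_top
      _ ≤ ENNReal.ofReal ((Nat.factorial (2 * k) : ℝ)) * 1 := by
          exact mul_le_mul_right h _
      _ = ENNReal.ofReal ((Nat.factorial (2 * k) : ℝ)) := mul_one _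
  · intro h
    have hsqrt : (0:ℝ) < Real.sqrt 2 := Real.sqrt_pos.mpr (by norm_num)
    refine csInf_le ⟨0, fun c hc => hc.1.le⟩ ⟨hsqrt, ?_⟩
    have key : ∀ x, ENNReal.ofReal (Real.cosh (|f x| / Real.sqrt 2) - 1) =
        ∑' n : ℕ, ENNReal.ofReal (f x ^ (2 * (n + 1)) *
          ((2:ℝ) ^ (n + 1) * (Nat.factorial (2 * (n + 1)) : ℝ))⁻¹) := by
      intro x
      have hs := aux_hasSum |f x|
      have habs : ∀ n : ℕ, |f x| ^ (2 * (n + 1)) = f x ^ (2 * (n + 1)) := fun n => by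
        rw [← abs_pow, abs_of_nonneg (Even.pow_nonneg ⟨n + 1, by ring⟩ _)]
      simp only [habs] at hs
      rw [← hs.tsum_eq]
      refine ENNReal.ofReal_tsum_of_nonneg (fun n => ?_) hs.summable
      exact mul_nonneg (Even.pow_nonneg ⟨n + 1, by ring⟩ _) (by positivity)
    calc ∫⁻ x, ENNReal.ofReal (Real.cosh (|f x| / Real.sqrt 2) - 1) ∂μ
        = ∑' n : ℕ, ∫⁻ x, ENNReal.ofReal (f x ^ (2 * (n + 1)) *
            ((2:ℝ) ^ (n + 1) * (Nat.factorial (2 * (n + 1)) : ℝ))⁻¹) ∂μ := by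
          simp_rw [key]
          exact lintegral_tsum fun n =>
            (((hf.pow_const _).mul_const _).ennreal_ofReal).aemeasurable
      _ ≤ ∑' n : ℕ, ENNReal.ofReal ((2:ℝ)⁻¹ ^ (n + 1)) := by
          refine ENNReal.tsum_le_tsum fun n => ?_
          have hc : (0:ℝ) ≤ ((2:ℝ) ^ (n + 1) * (Nat.factorial (2 * (n + 1)) : ℝ))⁻¹ := by
            positivity
          calc ∫⁻ x, ENNReal.ofReal (f x ^ (2 * (n + 1)) *
                ((2:ℝ) ^ (n + 1) * (Nat.factorial (2 * (n + 1)) : ℝ))⁻¹) ∂μ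
              = ENNReal.ofReal (((2:ℝ) ^ (n + 1) * (Nat.factorial (2 * (n + 1)) : ℝ))⁻¹) *
                  ∫⁻ x, ENNReal.ofReal (f x ^ (2 * (n + 1))) ∂μ := by
                simp_rw [mul_comm (f _ ^ (2 * (n + 1)))]
                rw [← lintegral_const_mul' _ _ ENNReal.ofReal_ne_top]
                congr 1 with x
                rw [← ENNReal.ofReal_mul hc]
            _ ≤ ENNReal.ofReal (((2:ℝ) ^ (n + 1) * (Nat.factorial (2 * (n + 1)) : ℝ))⁻¹) *
                  ENNReal.ofReal ((Nat.factorial (2 * (n + 1)) : ℝ)) :=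
                mul_le_mul_right (h (n + 1) (by omega)) _
            _ = ENNReal.ofReal ((2:ℝ)⁻¹ ^ (n + 1)) := by
                rw [← ENNReal.ofReal_mul hc]
                congr 1
                have hfac : (0:ℝ) < (Nat.factorial (2 * (n + 1)) : ℝ) := by positivity
                field_simp
                rw [← mul_pow]; norm_num
      _ = ∑' n : ℕ, (2⁻¹ : ℝ≥0∞) ^ (n + 1) := by
          congr 1 with n
          rw [ENNReal.ofReal_pow (by norm_num), ENNReal.ofReal_inv_of_pos (by norm_num)]
          norm_num
      _ = 1 := by
          simp_rw [pow_succ']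
          rw [ENNReal.tsum_mul_left, ENNReal.tsum_geometric]
          rw [ENNReal.one_sub_inv_two]
          rw [inv_inv]
          exact ENNReal.inv_mul_cancel (by norm_num) (by norm_num)
end

section
/- Let γ be the standard Gaussian measure on ℝⁿ and f(x) = |x|². The truncated sequence f_N(x) = f(x)·1_{|x| ≤ N} converges to f pointwise and in every L^α(γ), 1 ≤ α < ∞, but does NOT converge to f in the Luxemburg norm of L^{cosh−1}(γ): for every N and every λ ≥ 1/2, ∫ (cosh(λ(f − f_N)) − 1) dγ = ∞. -/
open MeasureTheory Real Filter Set

/-- The standard Gaussian measure on `ℝⁿ`. -/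
noncomputable def gaussianMeasure (n : ℕ) : Measure (EuclideanSpace ℝ (Fin n)) :=
  volume.withDensity fun x =>
    ENNReal.ofReal ((2 * Real.pi) ^ (-(n : ℝ) / 2) * Real.exp (-‖x‖ ^ 2 / 2))

section Aux

lemma aux_integrable_exp_quarter (n : ℕ) :
    Integrable (fun x : EuclideanSpace ℝ (Fin n) => Real.exp (-(1/4) * ‖x‖ ^ 2)) := by
  have h := (GaussianFourier.integrable_cexp_neg_mul_sq_norm_add
      (b := (1/4 : ℂ)) (by norm_num) 0 (0 : EuclideanSpace ℝ (Fin n))).norm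
  refine h.congr (Eventually.of_forall fun x => ?_)
  simp [Complex.norm_exp]
  norm_cast

lemma aux_volume_compl_ball_top (n : ℕ) (hn : 1 ≤ n) (M : ℝ) :
    volume {x : EuclideanSpace ℝ (Fin n) | M ≤ ‖x‖} = ⊤ := by
  haveI : Nonempty (Fin n) := ⟨⟨0, hn⟩⟩
  haveI : Nontrivial (EuclideanSpace ℝ (Fin n)) :=
    ⟨⟨EuclideanSpace.single (Classical.arbitrary _) 1, 0, by
      intro h
      have := congrArg (fun v : EuclideanSpace ℝ (Fin n) => v (Classical.arbitrary _)) h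
      simpa using this⟩⟩
  have huniv : volume (univ : Set (EuclideanSpace ℝ (Fin n))) = ⊤ :=
    measure_univ_of_isAddLeftInvariant volume
  by_contra hS
  have hb : volume (Metric.closedBall (0 : EuclideanSpace ℝ (Fin n)) M) < ⊤ :=
    (isCompact_closedBall _ _).measure_lt_top
  have hsub : (univ : Set (EuclideanSpace ℝ (Fin n))) ⊆
      Metric.closedBall 0 M ∪ {x | M ≤ ‖x‖} := by
    intro x _
    rcases le_total ‖x‖ M with h | h
    · left; exact mem_closedBall_zero_iff.2 h
    · right; exact h
  have hle := (measure_mono hsub).trans (measure_union_le (μ := volume) _ _)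
  rw [huniv] at hle
  have hlt : volume (Metric.closedBall (0 : EuclideanSpace ℝ (Fin n)) M)
      + volume {x : EuclideanSpace ℝ (Fin n) | M ≤ ‖x‖} < ⊤ :=
    ENNReal.add_lt_top.2 ⟨hb, lt_top_iff_ne_top.2 hS⟩
  exact absurd (hle.trans_lt hlt) (lt_irrefl _)

lemma aux_lintegral_bound_lt_top (n : ℕ) (α : ℝ) (hα : 1 ≤ α) :
    ∫⁻ x, ENNReal.ofReal ((‖x‖ ^ 2) ^ α) ∂(gaussianMeasure n) < ⊤ := by
  have hα0 : (0:ℝ) < α := lt_of_lt_of_le one_pos hα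
  have hc0 : 0 < (2 * Real.pi) ^ (-(n : ℝ) / 2) := Real.rpow_pos_of_pos (by positivity) _
  have hDmeas : Measurable fun x : EuclideanSpace ℝ (Fin n) =>
      ENNReal.ofReal ((2 * Real.pi) ^ (-(n : ℝ) / 2) * Real.exp (-‖x‖ ^ 2 / 2)) := by
    measurability
  have hgmeas : Measurable fun x : EuclideanSpace ℝ (Fin n) =>
      ENNReal.ofReal ((‖x‖ ^ 2) ^ α) := by
    exact ENNReal.measurable_ofReal.comp
      ((Real.continuous_rpow_const hα0.le).comp ((continuous_norm.pow 2))).measurable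
  rw [gaussianMeasure, lintegral_withDensity_eq_lintegral_mul _ hDmeas hgmeas]
  set c : ℝ := (2 * Real.pi) ^ (-(n : ℝ) / 2) with hc
  have hbound : ∀ x : EuclideanSpace ℝ (Fin n),
      ENNReal.ofReal (c * Real.exp (-‖x‖ ^ 2 / 2)) * ENNReal.ofReal ((‖x‖ ^ 2) ^ α) ≤
      ENNReal.ofReal ((c * (4*α) ^ α) * Real.exp (-(1/4) * ‖x‖ ^ 2)) := by
    intro x
    rw [← ENNReal.ofReal_mul (by positivity)]
    apply ENNReal.ofReal_le_ofReal
    set t := ‖x‖ ^ 2 with ht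
    have ht0 : (0:ℝ) ≤ t := by positivity
    have key : t ^ α ≤ (4*α) ^ α * Real.exp (t/4) := by
      have h1 : t / (4*α) ≤ Real.exp (t/(4*α)) := by
        have := Real.add_one_le_exp (t/(4*α))
        linarith
      have h2 : (t/(4*α)) ^ α ≤ (Real.exp (t/(4*α))) ^ α :=
        Real.rpow_le_rpow (by positivity) h1 hα0.le
      have h3 : (Real.exp (t/(4*α))) ^ α = Real.exp (t/4) := by
        rw [← Real.exp_mul]
        congr 1
        field_simp
      calc t ^ α = ((t/(4*α)) * (4*α)) ^ α := by
            congr 1; field_simp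
        _ = (t/(4*α)) ^ α * (4*α) ^ α := Real.mul_rpow (by positivity) (by positivity)
        _ ≤ Real.exp (t/4) * (4*α) ^ α := by
            rw [← h3]
            exact mul_le_mul_of_nonneg_right h2 (by positivity)
        _ = (4*α) ^ α * Real.exp (t/4) := by ring
    have hexp : Real.exp (-t/2) * Real.exp (t/4) = Real.exp (-(1/4) * t) := by
      rw [← Real.exp_add]; congr 1; ring
    calc c * Real.exp (-t/2) * t ^ α
        ≤ c * Real.exp (-t/2) * ((4*α) ^ α * Real.exp (t/4)) :=
          mul_le_mul_of_nonneg_left key (by positivity)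
      _ = c * (4*α) ^ α * (Real.exp (-t/2) * Real.exp (t/4)) := by ring
      _ = c * (4*α) ^ α * Real.exp (-(1/4) * t) := by rw [hexp]
  calc ∫⁻ x, ENNReal.ofReal (c * Real.exp (-‖x‖ ^ 2 / 2)) * ENNReal.ofReal ((‖x‖ ^ 2) ^ α)
        ∂volume
      ≤ ∫⁻ x, ENNReal.ofReal ((c * (4*α) ^ α) * Real.exp (-(1/4) * ‖x‖ ^ 2)) ∂volume :=
        lintegral_mono hbound
    _ < ⊤ := ((aux_integrable_exp_quarter n).const_mul _).lintegral_lt_top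

end Aux

set_option maxHeartbeats 1000000 in
/-- The truncations `f_N = |x|² 1_{|x| ≤ N}` of `f(x) = |x|²` converge to `f`
pointwise and in every `L^α(γ)`, `1 ≤ α < ∞`, but not in the Luxemburg norm of
`L^{cosh-1}(γ)`: for every `N` and every `λ ≥ 1/2` the Orlicz integral of the
difference is infinite. -/
theorem truncation_no_orlicz_convergence (n : ℕ) (hn : 1 ≤ n)
    (f : ℕ → EuclideanSpace ℝ (Fin n) → ℝ)
    (hfdef : ∀ N x, f N x = Set.indicator {y | ‖y‖ ≤ (N : ℝ)} (fun y => ‖y‖ ^ 2) x) :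
    (∀ x, Tendsto (fun N => f N x) atTop (nhds (‖x‖ ^ 2))) ∧
    (∀ α : ℝ, 1 ≤ α →
      Tendsto (fun N => ∫⁻ x, ENNReal.ofReal (|‖x‖ ^ 2 - f N x| ^ α) ∂(gaussianMeasure n))
        atTop (nhds 0)) ∧
    (∀ N : ℕ, ∀ l : ℝ, 1 / 2 ≤ l →
      ∫⁻ x, ENNReal.ofReal (Real.cosh (l * (‖x‖ ^ 2 - f N x)) - 1) ∂(gaussianMeasure n)
        = ⊤) := by
  have hdiff : ∀ N (x : EuclideanSpace ℝ (Fin n)),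
      ‖x‖ ^ 2 - f N x = if ‖x‖ ≤ (N : ℝ) then 0 else ‖x‖ ^ 2 := by
    intro N x
    rw [hfdef]
    by_cases h : ‖x‖ ≤ (N : ℝ)
    · simp [Set.indicator_apply, Set.mem_setOf_eq, h]
    · simp [Set.indicator_apply, Set.mem_setOf_eq, h]
  refine ⟨?_, ?_, ?_⟩
  · -- pointwise convergence
    intro x
    apply tendsto_atTop_of_eventually_const (i₀ := ⌈‖x‖⌉₊)
    intro N hN
    have hx : ‖x‖ ≤ (N : ℝ) := (Nat.le_ceil _).trans (by exact_mod_cast hN)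
    rw [hfdef]
    simp [Set.indicator_apply, Set.mem_setOf_eq, hx]
  · -- L^α convergence
    intro α hα
    have hα0 : (0:ℝ) < α := lt_of_lt_of_le one_pos hα
    have hFeq : ∀ N (x : EuclideanSpace ℝ (Fin n)),
        ENNReal.ofReal (|‖x‖ ^ 2 - f N x| ^ α)
        = ENNReal.ofReal (if ‖x‖ ≤ (N : ℝ) then 0 else (‖x‖ ^ 2) ^ α) := by
      intro N x
      rw [hdiff]
      split_ifs with h
      · simp [Real.zero_rpow hα0.ne']
      · rw [abs_of_nonneg (by positivity)]
    simp_rw [hFeq]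
    have hmain := tendsto_lintegral_of_dominated_convergence
      (μ := gaussianMeasure n)
      (F := fun N x => ENNReal.ofReal (if ‖x‖ ≤ (N : ℝ) then 0 else (‖x‖ ^ 2) ^ α))
      (f := fun _ => 0)
      (bound := fun x => ENNReal.ofReal ((‖x‖ ^ 2) ^ α))
      (fun N => by
        apply ENNReal.measurable_ofReal.comp
        exact Measurable.ite (measurableSet_le measurable_norm measurable_const)
          measurable_const
          ((Real.continuous_rpow_const hα0.le).comp ((continuous_norm.pow 2))).measurable)
      (fun N => Eventually.of_forall fun x => by
        dsimp only
        split_ifs with h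
        · simp
        · exact le_rfl)
      (aux_lintegral_bound_lt_top n α hα).ne
      (Eventually.of_forall fun x => by
        apply tendsto_atTop_of_eventually_const (i₀ := ⌈‖x‖⌉₊)
        intro N hN
        have hx : ‖x‖ ≤ (N : ℝ) := (Nat.le_ceil _).trans (by exact_mod_cast hN)
        simp [hx])
    simpa using hmain
  · -- no Orlicz convergence
    intro N l hl
    have hc0 : 0 < (2 * Real.pi) ^ (-(n : ℝ) / 2) := Real.rpow_pos_of_pos (by positivity) _
    have hDmeas : Measurable fun x : EuclideanSpace ℝ (Fin n) =>
        ENNReal.ofReal ((2 * Real.pi) ^ (-(n : ℝ) / 2) * Real.exp (-‖x‖ ^ 2 / 2)) := by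
      measurability
    have hm : Measurable fun x : EuclideanSpace ℝ (Fin n) => ‖x‖ ^ 2 - f N x := by
      have heq : (fun x : EuclideanSpace ℝ (Fin n) => ‖x‖ ^ 2 - f N x)
          = fun x => if ‖x‖ ≤ (N : ℝ) then 0 else ‖x‖ ^ 2 := funext (hdiff N)
      rw [heq]
      exact Measurable.ite (measurableSet_le measurable_norm measurable_const)
        measurable_const (measurable_norm.pow_const 2)
    have hGmeas : Measurable fun x : EuclideanSpace ℝ (Fin n) =>
        ENNReal.ofReal (Real.cosh (l * (‖x‖ ^ 2 - f N x)) - 1) :=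
      ENNReal.measurable_ofReal.comp
        ((Real.continuous_cosh.measurable.comp (hm.const_mul l)).sub measurable_const)
    rw [gaussianMeasure, lintegral_withDensity_eq_lintegral_mul _ hDmeas hGmeas]
    simp only [Pi.mul_apply]
    set c : ℝ := (2 * Real.pi) ^ (-(n : ℝ) / 2) with hc
    set M : ℝ := max ((N : ℝ) + 1) 2 with hMdef
    set S : Set (EuclideanSpace ℝ (Fin n)) := {x : EuclideanSpace ℝ (Fin n) | M ≤ ‖x‖} with hSdef
    have hSmeas : MeasurableSet S :=
      measurableSet_le measurable_const measurable_norm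
    have hpt : ∀ x : EuclideanSpace ℝ (Fin n),
        (S.indicator (fun _ => ENNReal.ofReal (c/4)) x) ≤
        ENNReal.ofReal (c * Real.exp (-‖x‖ ^ 2 / 2)) *
          ENNReal.ofReal (Real.cosh (l * (‖x‖ ^ 2 - f N x)) - 1) := by
      intro x
      by_cases hx : M ≤ ‖x‖
      · rw [Set.indicator_of_mem (show x ∈ S from hx)]
        have hxN : ¬ ‖x‖ ≤ (N : ℝ) := by
          push_neg
          have h1 : (N : ℝ) + 1 ≤ M := le_max_left _ _
          linarith
        rw [hdiff, if_neg hxN]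
        have h2M : (2:ℝ) ≤ M := le_max_right _ _
        have h2x : (2:ℝ) ≤ ‖x‖ := h2M.trans hx
        set t := ‖x‖ ^ 2 with htdef
        have ht4 : (4:ℝ) ≤ t := by nlinarith
        have ht0 : (0:ℝ) ≤ t := by positivity
        have hcosh : Real.exp (t/2) / 2 - 1 ≤ Real.cosh (l * t) - 1 := by
          have h1 : t/2 ≤ l * t := by nlinarith [mul_nonneg (by linarith : (0:ℝ) ≤ l - 1/2) ht0]
          have h2 := Real.exp_le_exp.2 h1
          have h3 := Real.cosh_eq (l * t)
          have h4 := (Real.exp_pos (-(l * t))).le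
          linarith
        rw [← ENNReal.ofReal_mul (by positivity)]
        apply ENNReal.ofReal_le_ofReal
        have hid : Real.exp (-t/2) * Real.exp (t/2) = 1 := by
          have hz : -t/2 + t/2 = 0 := by ring
          rw [← Real.exp_add, hz, Real.exp_zero]
        have he : Real.exp (-t/2) ≤ 1/4 := by
          have h2e : Real.exp (-t/2) ≤ Real.exp (-2) := Real.exp_le_exp.2 (by linarith)
          have he1 : (2:ℝ) ≤ Real.exp 1 := by
            have := Real.add_one_le_exp (1:ℝ); linarith
          have he2 : (4:ℝ) ≤ Real.exp 2 := by
            have hee : Real.exp 2 = Real.exp 1 * Real.exp 1 := by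
              rw [← Real.exp_add]; norm_num
            have h22 : (2:ℝ) * 2 ≤ Real.exp 1 * Real.exp 1 :=
              mul_le_mul he1 he1 (by norm_num) (Real.exp_pos 1).le
            rw [hee]; linarith
          have hinv : Real.exp (-2 : ℝ) ≤ 1/4 := by
            rw [Real.exp_neg]
            rw [show (1:ℝ)/4 = (4:ℝ)⁻¹ by norm_num]
            exact inv_anti₀ (by norm_num) he2
          linarith
        have h5 : Real.exp (-t/2) * (Real.exp (t/2)/2 - 1) = 1/2 - Real.exp (-t/2) := by
          linear_combination hid / 2
        have h6 : Real.exp (-t/2) * (Real.exp (t/2)/2 - 1)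
            ≤ Real.exp (-t/2) * (Real.cosh (l * t) - 1) :=
          mul_le_mul_of_nonneg_left hcosh (Real.exp_pos _).le
        have h7 : (1:ℝ)/4 ≤ Real.exp (-t/2) * (Real.cosh (l * t) - 1) := by
          rw [h5] at h6; linarith
        calc c / 4 = c * (1/4) := by ring
          _ ≤ c * (Real.exp (-t/2) * (Real.cosh (l * t) - 1)) :=
              mul_le_mul_of_nonneg_left h7 hc0.le
          _ = c * Real.exp (-t/2) * (Real.cosh (l * t) - 1) := by ring
      · rw [Set.indicator_of_notMem (show x ∉ S from hx)]
        exact zero_le'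
    rw [eq_top_iff]
    calc (⊤ : ENNReal) = ENNReal.ofReal (c/4) * volume S := by
          rw [hSdef, aux_volume_compl_ball_top n hn M, ENNReal.mul_top]
          exact (ENNReal.ofReal_pos.2 (by positivity)).ne'
      _ = ∫⁻ _x in S, ENNReal.ofReal (c/4) ∂volume :=
          (setLIntegral_const _ _).symm
      _ = ∫⁻ x, S.indicator (fun _ => ENNReal.ofReal (c/4)) x ∂volume :=
          (lintegral_indicator hSmeas _).symm
      _ ≤ ∫⁻ x, ENNReal.ofReal (c * Real.exp (-‖x‖ ^ 2 / 2)) *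
            ENNReal.ofReal (Real.cosh (l * (‖x‖ ^ 2 - f N x)) - 1) ∂volume :=
          lintegral_mono hpt
end

section
/- For standard Gaussian measure γ on ℝⁿ and f, g ∈ C²_poly(ℝⁿ), ∫ ∇f·∇g dγ = ∫ f·(x·∇g − Δg) dγ. -/
open MeasureTheory Real

/-- A function is polynomially bounded. -/
def PolyBounded {n : ℕ} (f : EuclideanSpace ℝ (Fin n) → ℝ) : Prop :=
  ∃ C : ℝ, ∃ k : ℕ, ∀ x, |f x| ≤ C * (1 + ‖x‖) ^ k

/-- Membership in `C²_poly`: twice continuously differentiable with all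
derivatives up to order `2` polynomially bounded. -/
def CPoly2 {n : ℕ} (f : EuclideanSpace ℝ (Fin n) → ℝ) : Prop :=
  ContDiff ℝ 2 f ∧ ∀ j : ℕ, j ≤ 2 →
    ∃ C : ℝ, ∃ k : ℕ, ∀ x, ‖iteratedFDeriv ℝ j f x‖ ≤ C * (1 + ‖x‖) ^ k

/-! ### Auxiliary material on the Gaussian density -/

/-- The Gaussian density on `ℝⁿ`. -/
noncomputable def gDen (n : ℕ) (x : EuclideanSpace ℝ (Fin n)) : ℝ :=
  (2 * Real.pi) ^ (-(n : ℝ) / 2) * Real.exp (-‖x‖ ^ 2 / 2)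

variable {n : ℕ}

lemma gDen_pos (x : EuclideanSpace ℝ (Fin n)) : 0 < gDen n x := by
  have : (0:ℝ) < 2 * Real.pi := by positivity
  unfold gDen; positivity

lemma contDiff_gDen : ContDiff ℝ 2 (gDen n) := by
  unfold gDen
  exact contDiff_const.mul (((contDiff_norm_sq ℝ).neg.div_const 2).exp)

lemma continuous_gDen : Continuous (gDen n) := by
  unfold gDen
  exact continuous_const.mul (((continuous_norm.pow 2).neg.div_const 2).rexp)

lemma hasFDerivAt_gDen (x : EuclideanSpace ℝ (Fin n)) :
    HasFDerivAt (gDen n) (-(gDen n x) • innerSL ℝ x) x := by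
  have h1 : HasFDerivAt (fun x : EuclideanSpace ℝ (Fin n) => ‖x‖ ^ 2)
      (2 • innerSL ℝ x) x := (hasStrictFDerivAt_norm_sq x).hasFDerivAt
  have h2 : HasFDerivAt (fun x : EuclideanSpace ℝ (Fin n) => -‖x‖ ^ 2 / 2)
      (-(innerSL ℝ x)) x := by
    have h2' := h1.const_mul (-(1/2) : ℝ)
    have e : (fun x : EuclideanSpace ℝ (Fin n) => -‖x‖ ^ 2 / 2)
        = (fun x : EuclideanSpace ℝ (Fin n) => (-(1/2) : ℝ) * ‖x‖ ^ 2) := by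
      funext y; ring
    rw [e]
    refine h2'.congr_fderiv ?_
    ext y; simp [two_smul]; ring
  have h3 := h2.exp
  have h4 := h3.const_mul ((2 * Real.pi) ^ (-(n : ℝ) / 2))
  refine h4.congr_fderiv ?_
  ext y
  simp [gDen]
  ring

lemma fderiv_gDen_single (x : EuclideanSpace ℝ (Fin n)) (i : Fin n) :
    fderiv ℝ (gDen n) x (EuclideanSpace.single i 1) = -(x i) * gDen n x := by
  rw [(hasFDerivAt_gDen x).fderiv]
  simp [EuclideanSpace.inner_single_right]
  ring

/-! ### Gaussian integrability -/

lemma integrable_exp_neg_quarter_sq_norm :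
    Integrable (fun x : EuclideanSpace ℝ (Fin n) => Real.exp (-(‖x‖ ^ 2) / 4)) := by
  have h := (GaussianFourier.integrable_cexp_neg_mul_sq_norm_add_of_euclideanSpace
    (ι := Fin n) (b := (1/4 : ℂ)) (by norm_num) 0 0).norm
  have e : (fun x : EuclideanSpace ℝ (Fin n) => Real.exp (-(‖x‖ ^ 2) / 4))
      = fun v : EuclideanSpace ℝ (Fin n) =>
        ‖Complex.exp (-(1/4 : ℂ) * (‖v‖ : ℂ) ^ 2
          + 0 * (inner ℝ (0 : EuclideanSpace ℝ (Fin n)) v : ℝ))‖ := by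
    funext v
    rw [Complex.norm_exp]
    norm_num
    ring_nf
    norm_cast
  rw [e]
  exact h

lemma integrable_poly_gauss (k : ℕ) :
    Integrable (fun x : EuclideanSpace ℝ (Fin n) =>
      (1 + ‖x‖) ^ k * Real.exp (-‖x‖ ^ 2 / 2)) := by
  apply Integrable.mono' (integrable_exp_neg_quarter_sq_norm.const_mul (Real.exp ((k:ℝ)^2)))
  · exact ((continuous_const.add continuous_norm).pow k).mul
      (((continuous_norm.pow 2).neg.div_const 2).rexp) |>.aestronglyMeasurable
  · refine Filter.Eventually.of_forall fun x => ?_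
    set t := ‖x‖ with ht
    have h0 : (0:ℝ) ≤ t := norm_nonneg x
    have h1 : (1 + t) ^ k ≤ Real.exp ((k : ℝ) * t) := by
      calc (1 + t) ^ k ≤ (Real.exp t) ^ k := by
            apply pow_le_pow_left₀ (by linarith)
            linarith [Real.add_one_le_exp t]
      _ = Real.exp ((k : ℝ) * t) := by
            rw [← Real.exp_nat_mul]
    have h2 : (0:ℝ) < Real.exp (-t ^ 2 / 2) := Real.exp_pos _
    rw [Real.norm_eq_abs, abs_of_nonneg (by positivity)]
    calc (1 + t) ^ k * Real.exp (-t ^ 2 / 2)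
        ≤ Real.exp ((k:ℝ) * t) * Real.exp (-t ^ 2 / 2) := by
          exact mul_le_mul_of_nonneg_right h1 h2.le
      _ = Real.exp ((k:ℝ) * t + -t ^ 2 / 2) := (Real.exp_add _ _).symm
      _ ≤ Real.exp ((k:ℝ)^2 + -(t ^ 2) / 4) := by
          apply Real.exp_le_exp.2
          nlinarith [sq_nonneg (t/2 - (k:ℝ)), sq_nonneg t]
      _ = Real.exp ((k:ℝ)^2) * Real.exp (-(t^2) / 4) := Real.exp_add _ _

/-! ### Polynomially bounded functions -/

lemma PolyBounded.mul {f g : EuclideanSpace ℝ (Fin n) → ℝ}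
    (hf : PolyBounded f) (hg : PolyBounded g) :
    PolyBounded (fun x => f x * g x) := by
  obtain ⟨C₁, k₁, h₁⟩ := hf
  obtain ⟨C₂, k₂, h₂⟩ := hg
  refine ⟨C₁ * C₂, k₁ + k₂, fun x => ?_⟩
  have e1 : (0:ℝ) ≤ 1 + ‖x‖ := by positivity
  rw [abs_mul, pow_add, show C₁ * C₂ * ((1 + ‖x‖) ^ k₁ * (1 + ‖x‖) ^ k₂)
      = (C₁ * (1 + ‖x‖) ^ k₁) * (C₂ * (1 + ‖x‖) ^ k₂) by ring]
  exact mul_le_mul (h₁ x) (h₂ x) (abs_nonneg _) (le_trans (abs_nonneg _) (h₁ x))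

lemma polyBounded_coord (i : Fin n) :
    PolyBounded (fun x : EuclideanSpace ℝ (Fin n) => x i) := by
  refine ⟨1, 1, fun x => ?_⟩
  have h : |x i| ≤ ‖x‖ := by
    have := abs_real_inner_le_norm (EuclideanSpace.single i (1:ℝ)) x
    rwa [EuclideanSpace.inner_single_left, EuclideanSpace.norm_single, norm_one, one_mul,
      map_one, one_mul] at this
  simpa using le_trans h (by linarith [norm_nonneg x])

lemma PolyBounded.integrable_mul_gDen {f : EuclideanSpace ℝ (Fin n) → ℝ}
    (hb : PolyBounded f) (hc : Continuous f) :
    Integrable (fun x => f x * gDen n x) := by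
  obtain ⟨C, k, h⟩ := hb
  set c : ℝ := (2 * Real.pi) ^ (-(n : ℝ) / 2) with hc'
  have hcpos : 0 < c := by positivity
  apply Integrable.mono' ((integrable_poly_gauss k).const_mul (C * c))
  · exact (hc.mul continuous_gDen).aestronglyMeasurable
  · refine Filter.Eventually.of_forall fun x => ?_
    rw [Real.norm_eq_abs, abs_mul, abs_of_pos (gDen_pos x)]
    have : |f x| * gDen n x ≤ (C * (1 + ‖x‖) ^ k) * gDen n x :=
      mul_le_mul_of_nonneg_right (h x) (gDen_pos x).le
    refine le_trans this (le_of_eq ?_)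
    unfold gDen
    ring

lemma integral_gaussianMeasure (n : ℕ) (h : EuclideanSpace ℝ (Fin n) → ℝ) :
    ∫ x, h x ∂(gaussianMeasure n) = ∫ x, h x * gDen n x := by
  have meas : Measurable (fun x : EuclideanSpace ℝ (Fin n) => Real.toNNReal (gDen n x)) :=
    (continuous_real_toNNReal.comp continuous_gDen).measurable
  have e : gaussianMeasure n = volume.withDensity
      (fun x => ((fun x => Real.toNNReal (gDen n x)) x : ENNReal)) := rfl
  rw [e, integral_withDensity_eq_integral_smul meas h]
  congr 1
  funext x
  rw [NNReal.smul_def, Real.coe_toNNReal _ (gDen_pos x).le, smul_eq_mul, mul_comm]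

/-! ### Polynomial bounds on derivatives -/

lemma CPoly2.pb0 {f : EuclideanSpace ℝ (Fin n) → ℝ} (hf : CPoly2 f) : PolyBounded f := by
  obtain ⟨C, k, h⟩ := hf.2 0 (by norm_num)
  exact ⟨C, k, fun x => by simpa [norm_iteratedFDeriv_zero, Real.norm_eq_abs] using h x⟩

lemma CPoly2.pb1 {f : EuclideanSpace ℝ (Fin n) → ℝ} (hf : CPoly2 f)
    (v : EuclideanSpace ℝ (Fin n)) (hv : ‖v‖ = 1) :
    PolyBounded (fun x => fderiv ℝ f x v) := by
  obtain ⟨C, k, h⟩ := hf.2 1 (by norm_num)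
  refine ⟨C, k, fun x => ?_⟩
  have h1 : ‖fderiv ℝ f x‖ = ‖iteratedFDeriv ℝ 1 f x‖ := by
    rw [← norm_iteratedFDeriv_fderiv, norm_iteratedFDeriv_zero]
  calc |fderiv ℝ f x v| ≤ ‖fderiv ℝ f x‖ * ‖v‖ := (fderiv ℝ f x).le_opNorm v
    _ = ‖iteratedFDeriv ℝ 1 f x‖ := by rw [h1, hv, mul_one]
    _ ≤ C * (1 + ‖x‖) ^ k := h x

lemma CPoly2.fderiv_fderiv_apply {g : EuclideanSpace ℝ (Fin n) → ℝ} (hg : CPoly2 g)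
    (v : EuclideanSpace ℝ (Fin n)) (x w : EuclideanSpace ℝ (Fin n)) :
    fderiv ℝ (fun y => fderiv ℝ g y v) x w = fderiv ℝ (fderiv ℝ g) x w v := by
  have hdg : DifferentiableAt ℝ (fderiv ℝ g) x :=
    ((hg.1.fderiv_right (m := 1) (by norm_num)).differentiable (by norm_num)) x
  rw [fderiv_clm_apply hdg (differentiableAt_const v)]
  simp

lemma CPoly2.pb2 {g : EuclideanSpace ℝ (Fin n) → ℝ} (hg : CPoly2 g)
    (v : EuclideanSpace ℝ (Fin n)) (hv : ‖v‖ = 1) :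
    PolyBounded (fun x => fderiv ℝ (fun y => fderiv ℝ g y v) x v) := by
  obtain ⟨C, k, h⟩ := hg.2 2 (by norm_num)
  refine ⟨C, k, fun x => ?_⟩
  simp only []
  rw [hg.fderiv_fderiv_apply v x v]
  have h1 : ‖fderiv ℝ (fderiv ℝ g) x‖ = ‖iteratedFDeriv ℝ 2 g x‖ := by
    rw [show ‖fderiv ℝ (fderiv ℝ g) x‖ = ‖iteratedFDeriv ℝ 0 (fderiv ℝ (fderiv ℝ g)) x‖ from
      (by rw [norm_iteratedFDeriv_zero]), norm_iteratedFDeriv_fderiv,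
      norm_iteratedFDeriv_fderiv]
  calc |fderiv ℝ (fderiv ℝ g) x v v| ≤ ‖fderiv ℝ (fderiv ℝ g) x v‖ * ‖v‖ :=
        (fderiv ℝ (fderiv ℝ g) x v).le_opNorm v
    _ ≤ ‖fderiv ℝ (fderiv ℝ g) x‖ * ‖v‖ * ‖v‖ := by
        gcongr; exact (fderiv ℝ (fderiv ℝ g) x).le_opNorm v
    _ ≤ C * (1 + ‖x‖) ^ k := by rw [h1]; simp [hv]; exact h x

/-! ### The key one-direction integration by parts -/

lemma key_lemma {f g : EuclideanSpace ℝ (Fin n) → ℝ} (hf : CPoly2 f) (hg : CPoly2 g)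
    (i : Fin n) :
    ∫ x : EuclideanSpace ℝ (Fin n),
        (fderiv ℝ f x (EuclideanSpace.single i 1) * fderiv ℝ g x (EuclideanSpace.single i 1))
          * gDen n x
      = ∫ x : EuclideanSpace ℝ (Fin n),
        (f x * ((x i) * fderiv ℝ g x (EuclideanSpace.single i 1)
          - fderiv ℝ (fun y => fderiv ℝ g y (EuclideanSpace.single i 1)) x
              (EuclideanSpace.single i 1))) * gDen n x := by
  set v : EuclideanSpace ℝ (Fin n) := EuclideanSpace.single i 1 with hv
  have hvnorm : ‖v‖ = 1 := by simp [hv]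
  set G : EuclideanSpace ℝ (Fin n) → ℝ := fun y => fderiv ℝ g y v with hG
  set F : EuclideanSpace ℝ (Fin n) → ℝ := fun x => f x * gDen n x with hF
  have hfdiff : Differentiable ℝ f := hf.1.differentiable (by norm_num)
  have hgdiff : Differentiable ℝ g := hg.1.differentiable (by norm_num)
  have hGc1 : ContDiff ℝ 1 G :=
    (hg.1.fderiv_right (m := 1) (by norm_num)).clm_apply contDiff_const
  have hGdiff : Differentiable ℝ G := hGc1.differentiable (by norm_num)
  have hFdiff : Differentiable ℝ F :=
    hfdiff.mul (contDiff_gDen.differentiable (by norm_num))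
  have c_f : Continuous f := hf.1.continuous
  have c_df : Continuous (fun x => fderiv ℝ f x v) :=
    ((hf.1.fderiv_right (m := 1) (by norm_num)).clm_apply contDiff_const).continuous
  have c_G : Continuous G := hGc1.continuous
  have c_dG : Continuous (fun x => fderiv ℝ G x v) := by
    have : ContDiff ℝ 0 (fun x => fderiv ℝ G x) := hGc1.fderiv_right (by norm_num)
    exact (this.clm_apply contDiff_const).continuous
  have c_coord : Continuous (fun x : EuclideanSpace ℝ (Fin n) => x i) :=
    (EuclideanSpace.proj i).continuous
  have hdF : ∀ x, fderiv ℝ F x v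
      = (fderiv ℝ f x v - x i * f x) * gDen n x := by
    intro x
    have h1 : HasFDerivAt F (f x • (-(gDen n x) • innerSL ℝ x) + gDen n x • fderiv ℝ f x) x :=
      (hfdiff x).hasFDerivAt.mul (hasFDerivAt_gDen x)
    rw [h1.fderiv]
    have h2 : (innerSL ℝ x) v = x i := by
      rw [hv]
      simp [EuclideanSpace.inner_single_right]
    simp only [ContinuousLinearMap.add_apply, ContinuousLinearMap.coe_smul', Pi.smul_apply,
      ContinuousLinearMap.neg_apply, smul_eq_mul]
    rw [h2]
    ring
  have I1 : Integrable (fun x => (f x * fderiv ℝ G x v) * gDen n x) :=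
    (hf.pb0.mul (hg.pb2 v hvnorm)).integrable_mul_gDen (c_f.mul c_dG)
  have I3 : Integrable (fun x => (f x * G x) * gDen n x) :=
    (hf.pb0.mul (hg.pb1 v hvnorm)).integrable_mul_gDen (c_f.mul c_G)
  have I4 : Integrable (fun x => (fderiv ℝ f x v * G x) * gDen n x) :=
    ((hf.pb1 v hvnorm).mul (hg.pb1 v hvnorm)).integrable_mul_gDen (c_df.mul c_G)
  have I5 : Integrable (fun x => ((x i) * (f x * G x)) * gDen n x) :=
    ((polyBounded_coord i).mul (hf.pb0.mul (hg.pb1 v hvnorm))).integrable_mul_gDen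
      (c_coord.mul (c_f.mul c_G))
  have I1' : Integrable (fun x => F x * fderiv ℝ G x v) := by
    have e : (fun x => F x * fderiv ℝ G x v)
        = fun x => (f x * fderiv ℝ G x v) * gDen n x := by funext x; rw [hF]; ring
    rw [e]; exact I1
  have I2' : Integrable (fun x => fderiv ℝ F x v * G x) := by
    have e : (fun x => fderiv ℝ F x v * G x)
        = fun x => (fderiv ℝ f x v * G x) * gDen n x - ((x i) * (f x * G x)) * gDen n x := by
      funext x; rw [hdF x]; ring
    rw [e]; exact I4.sub I5
  have I3' : Integrable (fun x => F x * G x) := by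
    have e : (fun x => F x * G x) = fun x => (f x * G x) * gDen n x := by
      funext x; rw [hF]; ring
    rw [e]; exact I3
  have IBP := integral_mul_fderiv_eq_neg_fderiv_mul_of_integrable I2' I1' I3' (fun x _ => hFdiff x) (fun x _ => hGdiff x)
  have L1 : ∫ x, F x * fderiv ℝ G x v = ∫ x, (f x * fderiv ℝ G x v) * gDen n x := by
    congr 1; funext x; rw [hF]; ring
  have L2 : ∫ x, fderiv ℝ F x v * G x
      = (∫ x, (fderiv ℝ f x v * G x) * gDen n x) - ∫ x, ((x i) * (f x * G x)) * gDen n x := by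
    rw [← integral_sub I4 I5]
    congr 1; funext x; rw [hdF x]; ring
  rw [L1, L2] at IBP
  have target : ∫ x : EuclideanSpace ℝ (Fin n),
      (f x * ((x i) * G x - fderiv ℝ G x v)) * gDen n x
      = (∫ x, ((x i) * (f x * G x)) * gDen n x) - ∫ x, (f x * fderiv ℝ G x v) * gDen n x := by
    rw [← integral_sub I5 I1]
    congr 1; funext x; ring
  have main : ∫ x, (fderiv ℝ f x v * G x) * gDen n x
      = (∫ x, ((x i) * (f x * G x)) * gDen n x) - ∫ x, (f x * fderiv ℝ G x v) * gDen n x := by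
    linarith [IBP]
  rw [target, ← main]

/-- `∫ ∇f·∇g dγ = ∫ f (x·∇g - Δg) dγ` for `f, g ∈ C²_poly(ℝⁿ)`. -/
theorem gaussian_gradient_integration_by_parts (n : ℕ)
    (f g : EuclideanSpace ℝ (Fin n) → ℝ) (hf : CPoly2 f) (hg : CPoly2 g) :
    ∫ x, (∑ i : Fin n,
        fderiv ℝ f x (EuclideanSpace.single i 1) *
          fderiv ℝ g x (EuclideanSpace.single i 1)) ∂(gaussianMeasure n) =
    ∫ x, f x * ((∑ i : Fin n, x i * fderiv ℝ g x (EuclideanSpace.single i 1)) -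
        ∑ i : Fin n,
          fderiv ℝ (fun y => fderiv ℝ g y (EuclideanSpace.single i 1)) x
            (EuclideanSpace.single i 1)) ∂(gaussianMeasure n) := by
  have hvnorm : ∀ i : Fin n, ‖(EuclideanSpace.single i 1 : EuclideanSpace ℝ (Fin n))‖ = 1 := by
    intro i; simp
  have c_f : Continuous f := hf.1.continuous
  have c_df : ∀ i : Fin n, Continuous (fun x => fderiv ℝ f x (EuclideanSpace.single i 1)) :=
    fun i => ((hf.1.fderiv_right (m := 1) (by norm_num)).clm_apply contDiff_const).continuous
  have c_dg : ∀ i : Fin n, Continuous (fun x => fderiv ℝ g x (EuclideanSpace.single i 1)) :=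
    fun i => ((hg.1.fderiv_right (m := 1) (by norm_num)).clm_apply contDiff_const).continuous
  have c_ddg : ∀ i : Fin n, Continuous (fun x =>
      fderiv ℝ (fun y => fderiv ℝ g y (EuclideanSpace.single i 1)) x
        (EuclideanSpace.single i 1)) := by
    intro i
    have hGc1 : ContDiff ℝ 1 (fun y => fderiv ℝ g y (EuclideanSpace.single i 1)) :=
      (hg.1.fderiv_right (m := 1) (by norm_num)).clm_apply contDiff_const
    exact ((hGc1.fderiv_right (m := 0) (by norm_num)).clm_apply contDiff_const).continuous
  have c_coord : ∀ i : Fin n, Continuous (fun x : EuclideanSpace ℝ (Fin n) => x i) :=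
    fun i => (EuclideanSpace.proj i).continuous
  have ILHS : ∀ i : Fin n, Integrable (fun x : EuclideanSpace ℝ (Fin n) =>
      (fderiv ℝ f x (EuclideanSpace.single i 1) * fderiv ℝ g x (EuclideanSpace.single i 1))
        * gDen n x) := fun i =>
    ((hf.pb1 _ (hvnorm i)).mul (hg.pb1 _ (hvnorm i))).integrable_mul_gDen
      ((c_df i).mul (c_dg i))
  have IRHS : ∀ i : Fin n, Integrable (fun x : EuclideanSpace ℝ (Fin n) =>
      (f x * ((x i) * fderiv ℝ g x (EuclideanSpace.single i 1)
        - fderiv ℝ (fun y => fderiv ℝ g y (EuclideanSpace.single i 1)) x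
            (EuclideanSpace.single i 1))) * gDen n x) := by
    intro i
    have e : (fun x : EuclideanSpace ℝ (Fin n) =>
        (f x * ((x i) * fderiv ℝ g x (EuclideanSpace.single i 1)
          - fderiv ℝ (fun y => fderiv ℝ g y (EuclideanSpace.single i 1)) x
              (EuclideanSpace.single i 1))) * gDen n x)
        = fun x => ((x i) * (f x * fderiv ℝ g x (EuclideanSpace.single i 1))) * gDen n x
          - (f x * fderiv ℝ (fun y => fderiv ℝ g y (EuclideanSpace.single i 1)) x
              (EuclideanSpace.single i 1)) * gDen n x := by
      funext x; ring
    rw [e]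
    exact (((polyBounded_coord i).mul (hf.pb0.mul (hg.pb1 _ (hvnorm i)))).integrable_mul_gDen
        ((c_coord i).mul (c_f.mul (c_dg i)))).sub
      ((hf.pb0.mul (hg.pb2 _ (hvnorm i))).integrable_mul_gDen (c_f.mul (c_ddg i)))
  rw [integral_gaussianMeasure, integral_gaussianMeasure]
  have eL : (fun x : EuclideanSpace ℝ (Fin n) => (∑ i : Fin n,
      fderiv ℝ f x (EuclideanSpace.single i 1) * fderiv ℝ g x (EuclideanSpace.single i 1))
        * gDen n x)
      = fun x => ∑ i : Fin n,
        (fderiv ℝ f x (EuclideanSpace.single i 1) * fderiv ℝ g x (EuclideanSpace.single i 1))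
          * gDen n x := by
    funext x; rw [Finset.sum_mul]
  have eR : (fun x : EuclideanSpace ℝ (Fin n) =>
      (f x * ((∑ i : Fin n, x i * fderiv ℝ g x (EuclideanSpace.single i 1)) -
        ∑ i : Fin n, fderiv ℝ (fun y => fderiv ℝ g y (EuclideanSpace.single i 1)) x
          (EuclideanSpace.single i 1))) * gDen n x)
      = fun x => ∑ i : Fin n,
        (f x * ((x i) * fderiv ℝ g x (EuclideanSpace.single i 1)
          - fderiv ℝ (fun y => fderiv ℝ g y (EuclideanSpace.single i 1)) x
              (EuclideanSpace.single i 1))) * gDen n x := by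
    funext x
    rw [← Finset.sum_sub_distrib, Finset.mul_sum, Finset.sum_mul]
  rw [eL, eR, integral_finset_sum _ (fun i _ => ILHS i),
    integral_finset_sum _ (fun i _ => IRHS i)]
  exact Finset.sum_congr rfl (fun i _ => key_lemma hf hg i)
end

section
/- Let γ be a probability measure, u measurable with ∫ u dγ = 0, and suppose K₁(tu) := log ∫ e^{tu} dγ is finite for all t in an open interval I containing [0,1]. Let F be logarithmically convex on ℝ with Φ = F − 1 a Young function, and let f satisfy ∫ F(λ f) dγ ≤ 2 for all |λ| ≤ 1. Then for any t ∈ I with t > 1, ∫ Φ((t−1)/t · f) · e^{u − K₁(u)} dγ ≤ e^{−K₁(u)}·(2(t−1)/t + (1/t)e^{K₁(tu)}) − 1 < ∞; in particular f belongs to the Orlicz space L^Φ(p·γ) where p = e^{u − K₁(u)}. -/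
open MeasureTheory Real Set

/-- Exponential change of measure preserves Orlicz integrability: if
`∫ F(λf) dγ ≤ 2` for `|λ| ≤ 1` and `K₁(tu) = log ∫ e^{tu} dγ` is finite on an
open interval `I ⊇ [0,1]`, then for `t ∈ I`, `t > 1`,
`∫ Φ((t-1)/t · f) e^{u - K₁(u)} dγ ≤ e^{-K₁(u)}(2(t-1)/t + e^{K₁(tu)}/t) - 1 < ∞`,
so `f ∈ L^Φ(p·γ)` with `p = e^{u - K₁(u)}`. -/
theorem orlicz_space_change_of_density
    {α : Type*} [MeasurableSpace α] (γ : Measure α) [IsProbabilityMeasure γ]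
    (u f : α → ℝ) (hu : Measurable u) (hfm : Measurable f)
    (hu0 : ∫ x, u x ∂γ = 0)
    (I : Set ℝ) (hIopen : IsOpen I) (hI01 : Icc (0:ℝ) 1 ⊆ I)
    (K : ℝ → ℝ)
    (hKdef : ∀ t ∈ I, K t = Real.log (∫ x, Real.exp (t * u x) ∂γ))
    (hKfin : ∀ t ∈ I, ∫⁻ x, ENNReal.ofReal (Real.exp (t * u x)) ∂γ < ⊤)
    (F : ℝ → ℝ) (hFpos : ∀ x, 0 < F x)
    (hFlogconv : ConvexOn ℝ univ (fun x => Real.log (F x)))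
    (hF1 : F 0 = 1)
    (hΦconv : ConvexOn ℝ (Ici 0) (fun x => F x - 1))
    (hΦmono : StrictMonoOn (fun x => F x - 1) (Ici 0))
    (hFeven : ∀ x, F (-x) = F x)
    (hf : ∀ l : ℝ, |l| ≤ 1 → ∫⁻ x, ENNReal.ofReal (F (l * f x)) ∂γ ≤ 2) :
    ∀ t ∈ I, 1 < t →
      ∫⁻ x, ENNReal.ofReal ((F ((t - 1) / t * f x) - 1) *
          Real.exp (u x - K 1)) ∂γ ≤
        ENNReal.ofReal (Real.exp (-K 1) *
          (2 * (t - 1) / t + (1 / t) * Real.exp (K t)) - 1) := by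
  intro t htI ht1
  have ht0 : (0:ℝ) < t := lt_trans one_pos ht1
  set s : ℝ := (t - 1) / t with hs_def
  have hs0 : 0 ≤ s := div_nonneg (by linarith) ht0.le
  have hs1 : s ≤ 1 := by
    rw [div_le_one ht0]; linarith
  have htm1 : (0:ℝ) ≤ t - 1 := by linarith
  have hsum : s + 1 / t = 1 := by
    rw [hs_def, ← add_div, show t - 1 + 1 = t by ring, div_self ht0.ne']
  -- F is continuous hence measurable
  have hlogFcont : ContinuousOn (fun x => Real.log (F x)) univ :=
    hFlogconv.continuousOn isOpen_univ
  have hFcont : Continuous F := by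
    have : Continuous fun x => Real.exp (Real.log (F x)) :=
      Real.continuous_exp.comp (continuousOn_univ.1 hlogFcont)
    simpa [Real.exp_log (hFpos _)] using this
  have hFmeas : Measurable F := hFcont.measurable
  -- log F convex, log F 0 = 0, even; min at 0, so F y ≥ 1.
  have hFge1 : ∀ y : ℝ, 1 ≤ F y := by
    intro y
    have h := hFlogconv.2 (mem_univ y) (mem_univ (-y)) (by norm_num : (0:ℝ) ≤ 1/2)
      (by norm_num : (0:ℝ) ≤ 1/2) (by norm_num)
    simp only [smul_eq_mul] at h
    have : Real.log (F (1/2 * y + 1/2 * (-y))) ≤ Real.log (F y) := by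
      rw [hFeven y] at h; linarith
    have h0 : (1:ℝ)/2 * y + 1/2 * (-y) = 0 := by ring
    rw [h0, hF1, Real.log_one] at this
    have := Real.exp_le_exp.2 this
    rwa [Real.exp_zero, Real.exp_log (hFpos _)] at this
  -- pointwise key inequality
  have hkey : ∀ x, F (s * f x) * Real.exp (u x) ≤
      s * F (f x) + (1 / t) * Real.exp (t * u x) := by
    intro x
    have hconv := hFlogconv.2 (mem_univ (f x)) (mem_univ (0:ℝ)) hs0
      (by positivity : (0:ℝ) ≤ 1/t) hsum
    simp only [smul_eq_mul, mul_zero, add_zero, hF1, Real.log_one] at hconv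
    -- hconv : log (F (s * f x)) ≤ s * log (F (f x))
    have h1 : F (s * f x) ≤ (F (f x)) ^ s := by
      rw [Real.rpow_def_of_pos (hFpos _), mul_comm (Real.log (F (f x))) s]
      calc F (s * f x) = Real.exp (Real.log (F (s * f x))) :=
            (Real.exp_log (hFpos _)).symm
        _ ≤ Real.exp (s * Real.log (F (f x))) := Real.exp_le_exp.2 (by linarith)
    have h2 : Real.exp (u x) = (Real.exp (t * u x)) ^ (1/t : ℝ) := by
      rw [← Real.exp_mul]
      congr 1
      field_simp
    have h3 : (F (f x)) ^ s * (Real.exp (t * u x)) ^ (1/t : ℝ) ≤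
        s * F (f x) + (1/t) * Real.exp (t * u x) :=
      Real.geom_mean_le_arith_mean2_weighted hs0 (by positivity) (hFpos _).le
        (Real.exp_pos _).le hsum
    calc F (s * f x) * Real.exp (u x)
        ≤ (F (f x)) ^ s * Real.exp (u x) := by
          apply mul_le_mul_of_nonneg_right h1 (Real.exp_pos _).le
      _ = (F (f x)) ^ s * (Real.exp (t * u x)) ^ (1/t : ℝ) := by rw [h2]
      _ ≤ _ := h3
  -- membership facts
  have h1I : (1:ℝ) ∈ I := hI01 ⟨zero_le_one, le_refl 1⟩
  -- integrability of exp(t' u) for t' ∈ I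
  have hint : ∀ t' ∈ I, Integrable (fun x => Real.exp (t' * u x)) γ := by
    intro t' ht'
    refine ⟨(Real.measurable_exp.comp ((measurable_const.mul hu))).aestronglyMeasurable, ?_⟩
    rw [hasFiniteIntegral_iff_ofReal (Filter.Eventually.of_forall fun x => (Real.exp_pos _).le)]
    exact hKfin t' ht'
  have hexpK : ∀ t' ∈ I, Real.exp (K t') = ∫ x, Real.exp (t' * u x) ∂γ := by
    intro t' ht'
    rw [hKdef t' ht', Real.exp_log]
    rw [integral_pos_iff_support_of_nonneg (fun x => (Real.exp_pos _).le) (hint t' ht')]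
    have : Function.support (fun x => Real.exp (t' * u x)) = univ := by
      ext x; simp [Function.support, (Real.exp_pos (t' * u x)).ne']
    rw [this]
    simp
  have hlint : ∀ t' ∈ I, ∫⁻ x, ENNReal.ofReal (Real.exp (t' * u x)) ∂γ =
      ENNReal.ofReal (Real.exp (K t')) := by
    intro t' ht'
    rw [hexpK t' ht',
      ofReal_integral_eq_lintegral_ofReal (hint t' ht')
        (Filter.Eventually.of_forall fun x => (Real.exp_pos _).le)]
  -- define pieces
  set A := ∫⁻ x, ENNReal.ofReal ((F (s * f x) - 1) * Real.exp (u x - K 1)) ∂γ with hA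
  have hmeasFsf : Measurable fun x => F (s * f x) := hFmeas.comp (measurable_const.mul hfm)
  have hmeasE : Measurable fun x => Real.exp (u x - K 1) :=
    Real.measurable_exp.comp (hu.sub measurable_const)
  -- A + ∫ e^{u-K1} = ∫ F(sf) e^{u-K1}
  have hsplit : A + ∫⁻ x, ENNReal.ofReal (Real.exp (u x - K 1)) ∂γ =
      ∫⁻ x, ENNReal.ofReal (F (s * f x) * Real.exp (u x - K 1)) ∂γ := by
    rw [hA, ← lintegral_add_left (by
      exact ((hmeasFsf.sub measurable_const).mul hmeasE).ennreal_ofReal)]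
    congr 1
    ext x
    rw [← ENNReal.ofReal_add (by
        exact mul_nonneg (by linarith [hFge1 (s * f x)]) (Real.exp_pos _).le)
      (Real.exp_pos _).le]
    congr 1
    ring
  -- ∫ e^{u - K1} = 1
  have hE1 : ∫⁻ x, ENNReal.ofReal (Real.exp (u x - K 1)) ∂γ = 1 := by
    have : ∀ x, ENNReal.ofReal (Real.exp (u x - K 1)) =
        ENNReal.ofReal (Real.exp (-K 1)) * ENNReal.ofReal (Real.exp (1 * u x)) := by
      intro x
      rw [← ENNReal.ofReal_mul (Real.exp_pos _).le, ← Real.exp_add]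
      congr 1
      ring_nf
    simp_rw [this]
    rw [lintegral_const_mul _ (by
        exact (Real.measurable_exp.comp (measurable_const.mul hu)).ennreal_ofReal),
      hlint 1 h1I, ← ENNReal.ofReal_mul (Real.exp_pos _).le, ← Real.exp_add]
    simp
  -- bound on ∫ F(sf) e^{u-K1}
  have hB : ∫⁻ x, ENNReal.ofReal (F (s * f x) * Real.exp (u x - K 1)) ∂γ ≤
      ENNReal.ofReal (Real.exp (-K 1) * (2 * (t - 1) / t + (1 / t) * Real.exp (K t))) := by
    have hpt : ∀ x, ENNReal.ofReal (F (s * f x) * Real.exp (u x - K 1)) ≤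
        ENNReal.ofReal (Real.exp (-K 1)) *
          (ENNReal.ofReal (s * F (f x)) + ENNReal.ofReal ((1/t) * Real.exp (t * u x))) := by
      intro x
      rw [← ENNReal.ofReal_add (mul_nonneg hs0 (hFpos _).le) (by positivity),
        ← ENNReal.ofReal_mul (Real.exp_pos _).le]
      apply ENNReal.ofReal_le_ofReal
      have : F (s * f x) * Real.exp (u x - K 1) =
          Real.exp (-K 1) * (F (s * f x) * Real.exp (u x)) := by
        rw [Real.exp_sub, Real.exp_neg]
        ring
      rw [this]
      exact mul_le_mul_of_nonneg_left (hkey x) (Real.exp_pos _).le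
    calc ∫⁻ x, ENNReal.ofReal (F (s * f x) * Real.exp (u x - K 1)) ∂γ
        ≤ ∫⁻ x, ENNReal.ofReal (Real.exp (-K 1)) *
            (ENNReal.ofReal (s * F (f x)) + ENNReal.ofReal ((1/t) * Real.exp (t * u x))) ∂γ :=
          lintegral_mono hpt
      _ = ENNReal.ofReal (Real.exp (-K 1)) *
          (∫⁻ x, (ENNReal.ofReal (s * F (f x)) + ENNReal.ofReal ((1/t) * Real.exp (t * u x))) ∂γ) := by
          rw [lintegral_const_mul]
          exact ((measurable_const.mul (hFmeas.comp hfm)).ennreal_ofReal).add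
            ((measurable_const.mul (Real.measurable_exp.comp (measurable_const.mul hu))).ennreal_ofReal)
      _ ≤ ENNReal.ofReal (Real.exp (-K 1)) *
          (ENNReal.ofReal (2 * (t-1) / t) + ENNReal.ofReal ((1/t) * Real.exp (K t))) := by
          apply mul_le_mul_right
          have hm1 : Measurable fun x : α => ENNReal.ofReal (s * F (f x)) :=
            (measurable_const.mul (hFmeas.comp hfm)).ennreal_ofReal
          rw [lintegral_add_left hm1]
          apply add_le_add
          · simp_rw [ENNReal.ofReal_mul hs0]
            have hm2 : Measurable fun x : α => ENNReal.ofReal (F (f x)) :=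
              (hFmeas.comp hfm).ennreal_ofReal
            rw [lintegral_const_mul _ hm2]
            calc ENNReal.ofReal s * ∫⁻ x, ENNReal.ofReal (F (f x)) ∂γ
                ≤ ENNReal.ofReal s * 2 := by
                  apply mul_le_mul_right
                  have := hf 1 (by norm_num)
                  simpa using this
              _ = ENNReal.ofReal (2 * (t-1) / t) := by
                  have h2e : (2:ENNReal) = ENNReal.ofReal 2 := by norm_num
                  rw [h2e, ← ENNReal.ofReal_mul hs0]
                  congr 1
                  rw [hs_def]; ring
          · simp_rw [ENNReal.ofReal_mul (div_nonneg zero_le_one ht0.le)]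
            have hm3 : Measurable fun x : α => ENNReal.ofReal (Real.exp (t * u x)) :=
              (Real.measurable_exp.comp (measurable_const.mul hu)).ennreal_ofReal
            rw [lintegral_const_mul _ hm3, hlint t htI]
      _ = ENNReal.ofReal (Real.exp (-K 1) * (2 * (t - 1) / t + (1 / t) * Real.exp (K t))) := by
          rw [← ENNReal.ofReal_add (div_nonneg (by linarith) ht0.le)
              (mul_nonneg (div_nonneg zero_le_one ht0.le) (Real.exp_pos _).le),
            ← ENNReal.ofReal_mul (Real.exp_pos _).le]
          
  -- conclude
  have hfinal : A + 1 ≤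
      ENNReal.ofReal (Real.exp (-K 1) * (2 * (t - 1) / t + (1 / t) * Real.exp (K t))) := by
    rw [← hE1]
    exact hsplit.le.trans hB
  have := ENNReal.le_sub_of_add_le_right (by simp) hfinal
  calc A ≤ ENNReal.ofReal (Real.exp (-K 1) * (2 * (t - 1) / t + (1 / t) * Real.exp (K t))) - 1 :=
        this
    _ = ENNReal.ofReal (Real.exp (-K 1) * (2 * (t - 1) / t + (1 / t) * Real.exp (K t)) - 1) := by
        rw [ENNReal.ofReal_sub _ zero_le_one, ENNReal.ofReal_one]
end

section
/- Let γ be the standard Gaussian measure on ℝⁿ and let B₁ = {u ∈ L^{cosh−1}(γ) : ∫ u dγ = 0}. If u ∈ B₁ has Luxemburg norm ‖u‖ < 1, then K₁(u) = log ∫ e^{u} dγ is finite; that is, the open unit ball of B₁ is contained in the proper domain of the convex function K₁. -/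
open MeasureTheory Real

lemma gaussianMeasure_finite (n : ℕ) : gaussianMeasure n Set.univ < ⊤ := by
  have hint : Integrable (fun x : EuclideanSpace ℝ (Fin n) =>
      (2 * Real.pi) ^ (-(n : ℝ) / 2) * Real.exp (-‖x‖ ^ 2 / 2)) := by
    have h := (GaussianFourier.integrable_cexp_neg_mul_sq_norm_add (V := EuclideanSpace ℝ (Fin n))
      (b := (1/2 : ℂ)) (by norm_num) 0 0).norm
    have h2 : Integrable (fun x : EuclideanSpace ℝ (Fin n) => Real.exp (-‖x‖ ^ 2 / 2)) := by
      refine h.congr (Filter.Eventually.of_forall fun x => ?_)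
      simp only [Complex.norm_exp]
      congr 1
      push_cast
      ring_nf
      simp [Complex.mul_re, ← Complex.ofReal_pow]
    exact h2.const_mul _
  have : gaussianMeasure n Set.univ
      = ∫⁻ x : EuclideanSpace ℝ (Fin n), ENNReal.ofReal ((2 * Real.pi) ^ (-(n : ℝ) / 2) * Real.exp (-‖x‖ ^ 2 / 2)) := by
    rw [gaussianMeasure, withDensity_apply _ MeasurableSet.univ, setLIntegral_univ]
  rw [this, ← ofReal_integral_eq_lintegral_ofReal hint
    (Filter.Eventually.of_forall fun x => by positivity)]
  exact ENNReal.ofReal_lt_top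

/-- The open unit ball of the centered exponential Orlicz space `B₁` is in the
proper domain of `K₁`: if `u` is centered and its Luxemburg norm is `< 1`
(witnessed by some `ρ < 1`), then `K₁(u) = log ∫ e^u dγ` is finite. -/
theorem K1_finite_on_unit_ball (n : ℕ)
    (u : EuclideanSpace ℝ (Fin n) → ℝ) (hu : Measurable u)
    (hcentered : ∫ x, u x ∂(gaussianMeasure n) = 0)
    (hnorm : ∃ ρ : ℝ, 0 < ρ ∧ ρ < 1 ∧
      ∫⁻ x, ENNReal.ofReal (Real.cosh (|u x| / ρ) - 1) ∂(gaussianMeasure n) ≤ 1) :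
    ∫⁻ x, ENNReal.ofReal (Real.exp (u x)) ∂(gaussianMeasure n) < ⊤ := by
  obtain ⟨ρ, hρ0, hρ1, hI⟩ := hnorm
  have hpt : ∀ x, ENNReal.ofReal (Real.exp (u x))
      ≤ 2 * ENNReal.ofReal (Real.cosh (|u x| / ρ) - 1) + 2 := by
    intro x
    have h1 : Real.exp (u x) ≤ Real.exp (|u x| / ρ) := by
      apply Real.exp_le_exp.2
      calc u x ≤ |u x| := le_abs_self _
        _ ≤ |u x| / ρ := by
            rw [le_div_iff₀ hρ0]
            nlinarith [abs_nonneg (u x)]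
    have h2 : Real.exp (|u x| / ρ) ≤ 2 * (Real.cosh (|u x| / ρ) - 1) + 2 := by
      have := Real.cosh_eq (|u x| / ρ)
      have hpos : 0 < Real.exp (-(|u x| / ρ)) := Real.exp_pos _
      nlinarith
    calc ENNReal.ofReal (Real.exp (u x))
        ≤ ENNReal.ofReal (2 * (Real.cosh (|u x| / ρ) - 1) + 2) :=
          ENNReal.ofReal_le_ofReal (h1.trans h2)
      _ = 2 * ENNReal.ofReal (Real.cosh (|u x| / ρ) - 1) + 2 := by
          have hc : 0 ≤ Real.cosh (|u x| / ρ) - 1 := by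
            have := Real.one_le_cosh (|u x| / ρ); linarith
          rw [ENNReal.ofReal_add (by linarith) (by norm_num),
            ENNReal.ofReal_mul (by norm_num)]
          norm_num
  calc ∫⁻ x, ENNReal.ofReal (Real.exp (u x)) ∂(gaussianMeasure n)
      ≤ ∫⁻ x, (2 * ENNReal.ofReal (Real.cosh (|u x| / ρ) - 1) + 2) ∂(gaussianMeasure n) :=
        lintegral_mono hpt
    _ = 2 * ∫⁻ x, ENNReal.ofReal (Real.cosh (|u x| / ρ) - 1) ∂(gaussianMeasure n)
        + 2 * gaussianMeasure n Set.univ := by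
        rw [lintegral_add_right _ measurable_const, lintegral_const_mul]
        · simp [mul_comm]
        · exact (ENNReal.measurable_ofReal.comp
            ((Real.measurable_cosh.comp (hu.abs.div_const ρ)).sub measurable_const))
    _ ≤ 2 * 1 + 2 * gaussianMeasure n Set.univ := by
        gcongr
    _ < ⊤ := by
        have := gaussianMeasure_finite n
        finiteness
end
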